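/- Let K be a geometric simplicial complex in ℝ^d with finitely many faces and vertex set X, and let v, w ∈ S^{d−1} lie in the same connected component of Σ(X). Then there exists an order-preserving bijection φ : ℝ → ℝ such that the combinatorial Euler curves satisfy E_{K,v}(t) = E_{K,w}(φ(t)) for all t ∈ ℝ; in particular, the Euler curve of K in direction w can be deduced from the Euler curve in direction v. -/

import Mathlib

open scoped RealInnerProductSpace

/-- The union of equalizer hyperspheres `W(X) ⊆ S^{d-1}` for a set of points `X ⊆ ℝ^d`. -/
def hyperplaneUnionSet {d : ℕ} (X : Set (EuclideanSpace ℝ (Fin d))) :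
    Set (EuclideanSpace ℝ (Fin d)) :=
  ⋃ (x ∈ X) (y ∈ X) (_ : x ≠ y),
    {v ∈ Metric.sphere (0 : EuclideanSpace ℝ (Fin d)) 1 | ⟪v, x⟫ = ⟪v, y⟫}

/-- `Σ(X) = S^{d-1} \ W(X)`. -/
def sigmaSet {d : ℕ} (X : Set (EuclideanSpace ℝ (Fin d))) :
    Set (EuclideanSpace ℝ (Fin d)) :=
  Metric.sphere (0 : EuclideanSpace ℝ (Fin d)) 1 \ hyperplaneUnionSet X

/-- The lower star `K^{(x,v)}`: the faces of `K` containing the vertex `x` all of whose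
vertices have height (in direction `v`) at most that of `x`. -/
def lowerStar {d : ℕ} (K : Geometry.SimplicialComplex ℝ (EuclideanSpace ℝ (Fin d)))
    (x v : EuclideanSpace ℝ (Fin d)) : Set (Finset (EuclideanSpace ℝ (Fin d))) :=
  {σ ∈ K.faces | x ∈ σ ∧ ∀ y ∈ σ, ⟪v, y⟫ ≤ ⟪v, x⟫}

/-- The combinatorial Euler curve of `K` in direction `v`:
`E_{K,v}(t) = Σ_{x ∈ X, ⟨v,x⟩ ≤ t} Σ_{σ ∈ K^{(x,v)}} (−1)^{card σ − 1}`. -/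
noncomputable def eulerCurve {d : ℕ}
    (K : Geometry.SimplicialComplex ℝ (EuclideanSpace ℝ (Fin d)))
    (v : EuclideanSpace ℝ (Fin d)) (t : ℝ) : ℤ :=
  ∑ᶠ x ∈ {x ∈ K.vertices | ⟪v, x⟫ ≤ t},
    ∑ᶠ σ ∈ lowerStar K x v, (-1 : ℤ) ^ (σ.card - 1)

/-- if `v, w` lie in the same connected component of `Σ(X)`, where `X` is the
vertex set of a finite geometric simplicial complex `K ⊆ ℝ^d`, then there is an
order-preserving bijection `φ : ℝ → ℝ` with `E_{K,v}(t) = E_{K,w}(φ t)` for all `t`. -/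
noncomputable def plMap (c r : ℝ) : ℝ → ℝ := fun t => if t ≤ c then t else c + (t - c) * r

lemma plMap_strictMono (c : ℝ) {r : ℝ} (hr : 0 < r) : StrictMono (plMap c r) := by
  intro t1 t2 h
  unfold plMap
  by_cases h1 : t1 ≤ c
  · by_cases h2 : t2 ≤ c
    · simp [h1, h2, h]
    · simp only [if_pos h1, if_neg h2]
      nlinarith [mul_pos (show (0:ℝ) < t2 - c by push_neg at h2; linarith) hr]
  · have h2 : ¬ t2 ≤ c := fun h2 => h1 (le_trans h.le h2)
    simp only [if_neg h1, if_neg h2]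
    nlinarith [mul_lt_mul_of_pos_right (show t1 - c < t2 - c by linarith) hr]

lemma plMap_surjective (c : ℝ) {r : ℝ} (hr : 0 < r) : Function.Surjective (plMap c r) := by
  intro y
  by_cases hy : y ≤ c
  · exact ⟨y, by simp [plMap, hy]⟩
  · refine ⟨c + (y - c) / r, ?_⟩
    have h1 : 0 < (y - c) / r := div_pos (by push_neg at hy; linarith) hr
    have h2 : ¬ c + (y - c) / r ≤ c := by linarith
    simp only [plMap, if_neg h2]
    field_simp
    ring

lemma extend_orderIso (T : Finset ℝ) :
    ∀ G : ℝ → ℝ, (∀ a ∈ T, ∀ b ∈ T, a < b → G a < G b) →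
      ∃ φ : ℝ ≃o ℝ, ∀ a ∈ T, φ a = G a := by
  classical
  induction T using Finset.induction_on_max with
  | empty => intro G _; exact ⟨OrderIso.refl ℝ, by simp⟩
  | insert a s ha ih =>
    intro G hG
    obtain ⟨ψ, hψ⟩ := ih G (fun x hx y hy hxy =>
      hG x (Finset.mem_insert_of_mem hx) y (Finset.mem_insert_of_mem hy) hxy)
    rcases s.eq_empty_or_nonempty with rfl | hs
    · refine ⟨OrderIso.addRight (G a - a), ?_⟩
      intro x hx
      rw [Finset.mem_insert] at hx
      rcases hx with rfl | hx
      · show x + (G x - x) = G x; ring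
      · simp at hx
    · have hmem := s.max'_mem hs
      have hma : s.max' hs < a := ha _ hmem
      have hGm : G (s.max' hs) < G a :=
        hG _ (Finset.mem_insert_of_mem hmem) a (Finset.mem_insert_self a _) hma
      have hψa : ψ (s.max' hs) < ψ a := ψ.strictMono hma
      have hc : ψ (s.max' hs) = G (s.max' hs) := hψ _ hmem
      set c := G (s.max' hs) with hcdef
      set p := ψ a with hpdef
      set q := G a with hqdef
      have hcp : c < p := hc ▸ hψa
      have hcq : c < q := hGm
      have hr : 0 < (q - c) / (p - c) := div_pos (by linarith) (by linarith)
      set θ := StrictMono.orderIsoOfSurjective _ (plMap_strictMono c hr) (plMap_surjective c hr)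
        with hθdef
      have hθ : ∀ t, θ t = plMap c ((q - c) / (p - c)) t := fun t => rfl
      refine ⟨ψ.trans θ, ?_⟩
      intro x hx
      rw [Finset.mem_insert] at hx
      rcases hx with rfl | hx
      · show θ (ψ x) = G x
        rw [hθ, ← hpdef]
        have hnp : ¬ p ≤ c := not_le.mpr hcp
        simp only [plMap, if_neg hnp]
        rw [← hqdef, mul_comm, div_mul_cancel₀ _ (sub_ne_zero.mpr (ne_of_gt hcp))]
        ring
      · show θ (ψ x) = G x
        have hGxc : G x ≤ c := by
          rcases lt_or_eq_of_le (s.le_max' x hx) with h | h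
          · exact le_of_lt (hG x (Finset.mem_insert_of_mem hx) _
              (Finset.mem_insert_of_mem hmem) h)
          · rw [h]
        rw [hψ x hx, hθ]
        simp [plMap, hGxc]

theorem stmt4 {d : ℕ} (K : Geometry.SimplicialComplex ℝ (EuclideanSpace ℝ (Fin d)))
    (hfin : K.faces.Finite)
    (v w : EuclideanSpace ℝ (Fin d))
    (hv : v ∈ sigmaSet K.vertices)
    (hw : w ∈ connectedComponentIn (sigmaSet K.vertices) v) :
    ∃ φ : ℝ ≃o ℝ, ∀ t : ℝ, eulerCurve K v t = eulerCurve K w (φ t) := by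
  classical
  set X := K.vertices with hXdef
  have hsub : connectedComponentIn (sigmaSet X) v ⊆ sigmaSet X :=
    connectedComponentIn_subset _ _
  have hvC : v ∈ connectedComponentIn (sigmaSet X) v := mem_connectedComponentIn hv
  have hconn : IsPreconnected (connectedComponentIn (sigmaSet X) v) :=
    isPreconnected_connectedComponentIn
  -- on Σ(X), distinct points of X have distinct heights
  have hne : ∀ u ∈ sigmaSet X, ∀ x ∈ X, ∀ y ∈ X, x ≠ y → ⟪u, x⟫ ≠ ⟪u, y⟫ := by
    intro u hu x hx y hy hxy h
    refine hu.2 ?_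
    simp only [hyperplaneUnionSet, Set.mem_iUnion]
    exact ⟨x, hx, y, hy, hxy, hu.1, h⟩
  -- strict order of heights is constant on the connected component
  have hsign : ∀ x ∈ X, ∀ y ∈ X, ⟪v, x⟫ < ⟪v, y⟫ → ⟪w, x⟫ < ⟪w, y⟫ := by
    intro x hx y hy hlt
    have hxy : x ≠ y := by rintro rfl; exact lt_irrefl _ hlt
    by_contra hge
    push_neg at hge
    have hwne : ⟪w, x⟫ ≠ ⟪w, y⟫ := hne w (hsub hw) x hx y hy hxy
    have hwlt : ⟪w, y⟫ - ⟪w, x⟫ < 0 := by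
      rcases lt_or_eq_of_le hge with h | h
      · linarith
      · exact absurd h.symm hwne
    have hcont : ContinuousOn
        (fun u : EuclideanSpace ℝ (Fin d) => ⟪u, y⟫ - ⟪u, x⟫)
        (connectedComponentIn (sigmaSet X) v) :=
      ((continuous_id.inner continuous_const).sub
        (continuous_id.inner continuous_const)).continuousOn
    have himv := hconn.intermediate_value hw hvC hcont
    have h0 : (0 : ℝ) ∈ Set.Icc (⟪w, y⟫ - ⟪w, x⟫) (⟪v, y⟫ - ⟪v, x⟫) :=
      ⟨hwlt.le, by linarith⟩
    obtain ⟨u, hu, hu0⟩ := himv h0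
    simp only at hu0
    exact hne u (hsub hu) x hx y hy hxy (by linarith)
  have hinj : ∀ x ∈ X, ∀ y ∈ X, ⟪v, x⟫ = ⟪v, y⟫ → x = y := by
    intro x hx y hy h
    by_contra hxy
    exact hne v hv x hx y hy hxy h
  have hlt : ∀ x ∈ X, ∀ y ∈ X, (⟪v, x⟫ < ⟪v, y⟫ ↔ ⟪w, x⟫ < ⟪w, y⟫) := by
    intro x hx y hy
    constructor
    · exact hsign x hx y hy
    · intro h
      have hxy : x ≠ y := by rintro rfl; exact lt_irrefl _ h
      rcases lt_trichotomy (⟪v, x⟫) (⟪v, y⟫) with h' | h' | h'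
      · exact h'
      · exact absurd (hinj x hx y hy h') hxy
      · exact absurd (hsign y hy x hx h') (not_lt.mpr h.le)
  have hle : ∀ x ∈ X, ∀ y ∈ X, (⟪v, x⟫ ≤ ⟪v, y⟫ ↔ ⟪w, x⟫ ≤ ⟪w, y⟫) := by
    intro x hx y hy
    rw [← not_lt, ← not_lt]
    exact not_congr (hlt y hy x hx)
  -- X is finite
  have hXfin : X.Finite := by
    have hsubX : X ⊆ (fun x : EuclideanSpace ℝ (Fin d) => ({x} : Finset _)) ⁻¹' K.faces :=
      fun x hx => Geometry.SimplicialComplex.mem_vertices.mp hx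
    exact Set.Finite.subset (hfin.preimage (Finset.singleton_injective.injOn)) hsubX
  -- vertices of faces are vertices of K
  have hvert : ∀ σ ∈ K.faces, ∀ y ∈ σ, y ∈ X := by
    intro σ hσ y hy
    exact Geometry.SimplicialComplex.mem_vertices.mpr
      (K.down_closed hσ (Finset.singleton_subset_iff.mpr hy) (Finset.singleton_nonempty y))
  -- the finite set of v-heights and the target function
  set T : Finset ℝ := hXfin.toFinset.image (fun x => ⟪v, x⟫) with hTdef
  set G : ℝ → ℝ := fun t =>
    if ht : ∃ x ∈ X, ⟪v, x⟫ = t then ⟪w, ht.choose⟫ else t with hGdef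
  have hmono : ∀ a ∈ T, ∀ b ∈ T, a < b → G a < G b := by
    intro a ha b hb hab
    have hta : ∃ x ∈ X, ⟪v, x⟫ = a := by
      simpa [hTdef, Set.Finite.mem_toFinset] using ha
    have htb : ∃ x ∈ X, ⟪v, x⟫ = b := by
      simpa [hTdef, Set.Finite.mem_toFinset] using hb
    simp only [hGdef, dif_pos hta, dif_pos htb]
    have h1 := hta.choose_spec
    have h2 := htb.choose_spec
    exact hsign _ h1.1 _ h2.1 (by rw [h1.2, h2.2]; exact hab)
  obtain ⟨φ, hφ⟩ := extend_orderIso T G hmono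
  have hφX : ∀ x ∈ X, φ ⟪v, x⟫ = ⟪w, x⟫ := by
    intro x hx
    have hmT : ⟪v, x⟫ ∈ T := by
      simp [hTdef, Set.Finite.mem_toFinset]
      exact ⟨x, hx, rfl⟩
    rw [hφ _ hmT]
    have ht : ∃ x' ∈ X, ⟪v, x'⟫ = ⟪v, x⟫ := ⟨x, hx, rfl⟩
    simp only [hGdef, dif_pos ht]
    have hspec := ht.choose_spec
    rw [hinj _ hspec.1 x hx hspec.2]
  refine ⟨φ, fun t => ?_⟩
  unfold eulerCurve
  apply finsum_mem_congr
  · ext x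
    simp only [Set.mem_setOf_eq]
    refine and_congr_right fun hx => ?_
    rw [← hφX x hx]
    exact (OrderIso.le_iff_le φ).symm
  · intro x hx
    have hls : lowerStar K x v = lowerStar K x w := by
      ext σ
      unfold lowerStar
      simp only [Set.mem_setOf_eq]
      refine and_congr_right fun hσ => and_congr_right fun hxσ => ?_
      exact forall₂_congr fun y hy => hle y (hvert σ hσ y hy) x (hvert σ hσ x hxσ)
    rw [hls]
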